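/- arXiv:1712.07880 — 3 statements merged into one kernel-verified Lean document; each statement's English description precedes it below -/
import Mathlib

section
/- Let T be a join tree of an acyclic hypergraph H, and suppose H is extended by adding a vertex y to every edge e that contains a fixed nonempty set X of vertices with y in some edge e0 containing X union {y} (and y already appears together with X in e0). Then the tree T with each edge so extended is a join tree of the extended hypergraph. In particular, extending every edge containing X by y preserves acyclicity. -/
structure SetHypergraph (V : Type*) where
  edges : Set (Set V)
  nonempty_of_mem : ∀ e ∈ edges, e.Nonempty

namespace SetHypergraph

variable {V : Type*}

/-- The vertex set of a hypergraph: all vertices occurring in some edge. -/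
def vertexSet (H : SetHypergraph V) : Set V := ⋃ e ∈ H.edges, e

/-- Two vertices are neighbors if they appear together in some edge. -/
def Neighbors (H : SetHypergraph V) (u v : V) : Prop := ∃ e ∈ H.edges, u ∈ e ∧ v ∈ e

/-- A clique: a set of pairwise neighboring vertices. -/
def IsClique (H : SetHypergraph V) (C : Set V) : Prop := ∀ u ∈ C, ∀ v ∈ C, H.Neighbors u v

/-- Conformal: every clique is contained in some edge. -/
def Conformal (H : SetHypergraph V) : Prop := ∀ C : Set V, H.IsClique C → ∃ e ∈ H.edges, C ⊆ e

/-- A chordless cycle (x_1, ..., x_n), n ≥ 3, of distinct vertices: the neighboring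
pairs among them are exactly the consecutive (cyclically) ones. -/
def HasChordlessCycle (H : SetHypergraph V) : Prop :=
  ∃ (n : ℕ) (x : Fin (n + 3) → V), Function.Injective x ∧
    (∀ i, x i ∈ H.vertexSet) ∧
    ∀ i j : Fin (n + 3), i ≠ j → (H.Neighbors (x i) (x j) ↔ (j = i + 1 ∨ i = j + 1))

/-- A join tree: a tree on the edges of `H` such that for each vertex the set of
edges containing it induces a connected subtree (running intersection property). -/
def IsJoinTree (H : SetHypergraph V) (T : SimpleGraph ↥H.edges) : Prop :=
  T.IsTree ∧ ∀ v ∈ H.vertexSet, (T.induce {e : ↥H.edges | v ∈ e.1}).Connected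

/-- A hypergraph is acyclic if it admits a join tree. -/
def Acyclic (H : SetHypergraph V) : Prop := ∃ T : SimpleGraph ↥H.edges, H.IsJoinTree T

end SetHypergraph

open SimpleGraph

lemma reachable_induce_of_forall_mem {α : Type*} {G : SimpleGraph α} {S : Set α}
    {a b : α} (w : G.Walk a b) (hw : ∀ v ∈ w.support, v ∈ S)
    (ha : a ∈ S) (hb : b ∈ S) :
    (G.induce S).Reachable ⟨a, ha⟩ ⟨b, hb⟩ := by
  induction w with
  | nil => exact Reachable.refl _
  | @cons a c b h p ih =>
    have hc : c ∈ S := hw c (by simp)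
    have hadj : (G.induce S).Adj ⟨a, ha⟩ ⟨c, hc⟩ := by simpa using h
    exact hadj.reachable.trans (ih (fun v hv => hw v (by simp [hv])) hc hb)

lemma reachable_induce_mono {α : Type*} {G : SimpleGraph α} {A S : Set α} (hAS : A ⊆ S)
    {a b : α} (ha : a ∈ A) (hb : b ∈ A)
    (h : (G.induce A).Reachable ⟨a, ha⟩ ⟨b, hb⟩) :
    (G.induce S).Reachable ⟨a, hAS ha⟩ ⟨b, hAS hb⟩ := by
  obtain ⟨w⟩ := h
  refine reachable_induce_of_forall_mem (w.map (SimpleGraph.Embedding.induce A).toHom) ?_ _ _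
  intro v hv
  rw [SimpleGraph.Walk.support_map] at hv
  obtain ⟨u, hu, rfl⟩ := List.mem_map.1 hv
  exact hAS u.2

open Classical in
theorem extended_tree_is_joinTree
    {V : Type*} (H : SetHypergraph V)
    (T : SimpleGraph ↥H.edges) (hT : H.IsJoinTree T)
    (X : Set V) (hX : X.Nonempty) (y : V)
    (e₀ : Set V) (he₀ : e₀ ∈ H.edges) (hXy : X ∪ {y} ⊆ e₀)
    (H' : SetHypergraph V)
    (hH' : H'.edges = (fun e => if X ⊆ e then e ∪ {y} else e) '' H.edges)
    (hinj : Set.InjOn (fun e => if X ⊆ e then e ∪ {y} else e) H.edges) :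
    (∃ T' : SimpleGraph ↥H'.edges,
      (∀ f g : ↥H'.edges, T'.Adj f g ↔ ∃ e₁ e₂ : ↥H.edges, T.Adj e₁ e₂ ∧
        f.1 = (if X ⊆ e₁.1 then e₁.1 ∪ {y} else e₁.1) ∧
        g.1 = (if X ⊆ e₂.1 then e₂.1 ∪ {y} else e₂.1)) ∧
      H'.IsJoinTree T') ∧ H'.Acyclic := by
  classical
  set ext : Set V → Set V := fun e => if X ⊆ e then e ∪ {y} else e with hextdef
  have hmemf : ∀ e : ↥H.edges, ext e.1 ∈ H'.edges := fun e => by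
    rw [hH']; exact ⟨e.1, e.2, rfl⟩
  have hFbij : Function.Bijective (fun e : ↥H.edges => (⟨ext e.1, hmemf e⟩ : ↥H'.edges)) := by
    constructor
    · intro a b hab
      exact Subtype.ext (hinj a.2 b.2 (congrArg Subtype.val hab))
    · rintro ⟨g, hg⟩
      rw [hH'] at hg
      obtain ⟨e, he, rfl⟩ := hg
      exact ⟨⟨e, he⟩, rfl⟩
  let φ : ↥H.edges ≃ ↥H'.edges := Equiv.ofBijective _ hFbij
  have hφval : ∀ e : ↥H.edges, (φ e).1 = ext e.1 := fun e => rfl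
  let T' : SimpleGraph ↥H'.edges := T.map φ.toEmbedding
  let i : T ≃g T' := SimpleGraph.Iso.map φ T
  -- basic membership facts about ext
  have hsub : ∀ e : Set V, e ⊆ ext e := by
    intro e v hv
    by_cases h : X ⊆ e <;> simp [hextdef, h, hv]
  have hne : ∀ (v : V), v ≠ y → ∀ e : Set V, (v ∈ ext e ↔ v ∈ e) := by
    intro v hv e
    by_cases h : X ⊆ e <;> simp [hextdef, h, hv]
  have hymem : ∀ e : Set V, (y ∈ ext e ↔ y ∈ e ∨ X ⊆ e) := by
    intro e
    by_cases h : X ⊆ e <;> simp [hextdef, h]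
  have hyE0 : y ∈ e₀ := hXy (Or.inr rfl)
  have hXE0 : X ⊆ e₀ := fun x hx => hXy (Or.inl hx)
  set E0 : ↥H.edges := ⟨e₀, he₀⟩
  -- the crucial connectivity for vertex y
  have hkey : (T.induce {e : ↥H.edges | y ∈ ext e.1}).Connected := by
    have hE0S : y ∈ ext E0.1 := (hymem e₀).2 (Or.inl hyE0)
    have hreach : ∀ a : {e : ↥H.edges | y ∈ ext e.1},
        (T.induce {e : ↥H.edges | y ∈ ext e.1}).Reachable a ⟨E0, hE0S⟩ := by
      rintro ⟨e, he⟩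
      rcases (hymem e.1).1 he with hy | hXe
      · -- y ∈ e
        have hyv : y ∈ H.vertexSet := Set.mem_iUnion₂.2 ⟨e.1, e.2, hy⟩
        have hconn := hT.2 y hyv
        have hr := hconn.preconnected ⟨e, hy⟩ ⟨E0, hyE0⟩
        have hAS : {e' : ↥H.edges | y ∈ e'.1} ⊆ {e' : ↥H.edges | y ∈ ext e'.1} :=
          fun e' h' => (hymem e'.1).2 (Or.inl h')
        exact reachable_induce_mono hAS hy hyE0 hr
      · -- X ⊆ e
        obtain ⟨P, hP, hPuniq⟩ := hT.1.existsUnique_path e E0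
        have hsupp : ∀ a ∈ P.support, X ⊆ a.1 := by
          intro a ha x hx
          have hxv : x ∈ H.vertexSet := Set.mem_iUnion₂.2 ⟨e₀, he₀, hXE0 hx⟩
          have hconn := hT.2 x hxv
          obtain ⟨w⟩ := hconn.preconnected ⟨e, hXe hx⟩ ⟨E0, hXE0 hx⟩
          have w' : T.Walk e E0 :=
            w.map (SimpleGraph.Embedding.induce {e' : ↥H.edges | x ∈ e'.1}).toHom
          set w2 : T.Walk e E0 :=
            w.map (SimpleGraph.Embedding.induce {e' : ↥H.edges | x ∈ e'.1}).toHom with hw2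
          have hPx : (w2.toPath : T.Walk e E0) = P := hPuniq _ w2.toPath.2
          rw [← hPx] at ha
          have ha2 := SimpleGraph.Walk.support_toPath_subset w2 ha
          simp only [hw2, SimpleGraph.Walk.support_map] at ha2
          obtain ⟨u, hu, rfl⟩ := List.mem_map.1 (show a ∈ w.support.map
            (SimpleGraph.Embedding.induce {e' : ↥H.edges | x ∈ e'.1}).toHom from by
              rw [← SimpleGraph.Walk.support_map]; exact ha2)
          exact u.2
        exact reachable_induce_of_forall_mem P
          (fun a ha => (hymem a.1).2 (Or.inr (hsupp a ha))) _ _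
    haveI : Nonempty {e : ↥H.edges | y ∈ ext e.1} := ⟨⟨E0, hE0S⟩⟩
    exact SimpleGraph.Connected.mk (fun a b => (hreach a).trans (hreach b).symm)
  -- join tree property of T'
  have hJT : H'.IsJoinTree T' := by
    constructor
    · constructor
      · exact (i.connected_iff).1 hT.1.isConnected
      · intro v c hc
        have := (SimpleGraph.Walk.map_isCycle_iff_of_injective
          (f := i.symm.toHom) (RelIso.injective i.symm)).2 hc
        exact (hT.1.2) _ this
    · intro v hv
      set S' : Set ↥H'.edges := {g : ↥H'.edges | v ∈ g.1} with hS'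
      -- iso between induced subgraphs
      have hiso : (T.induce (φ ⁻¹' S')) ≃g (T'.induce S') :=
        { toEquiv := φ.subtypeEquiv (fun a => Iff.rfl),
          map_rel_iff' := by
            intro a b
            simp only [Equiv.subtypeEquiv_apply, comap_adj, Function.Embedding.coe_subtype]
            exact i.map_adj_iff }
      refine (hiso.connected_iff).1 ?_
      have hpre : φ ⁻¹' S' = {e : ↥H.edges | v ∈ ext e.1} := rfl
      rw [hpre]
      by_cases hvy : v = y
      · subst hvy; exact hkey
      · have hEq : {e : ↥H.edges | v ∈ ext e.1} = {e : ↥H.edges | v ∈ e.1} := by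
          ext e; exact hne v hvy e.1
        rw [hEq]
        refine hT.2 v ?_
        -- v ∈ H.vertexSet
        obtain ⟨s, hs, hvs⟩ := Set.mem_iUnion₂.1 hv
        rw [hH'] at hs
        obtain ⟨e, he, rfl⟩ := hs
        exact Set.mem_iUnion₂.2 ⟨e, he, (hne v hvy e).1 hvs⟩
  refine ⟨⟨T', ?_, hJT⟩, ⟨T', hJT⟩⟩
  -- adjacency characterization
  intro f g
  constructor
  · rintro ⟨-, e₁, e₂, hadj, rfl, rfl⟩
    exact ⟨e₁, e₂, hadj, rfl, rfl⟩
  · rintro ⟨e₁, e₂, hadj, hf, hg⟩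
    refine ⟨?_, e₁, e₂, hadj, Subtype.ext hf.symm, Subtype.ext hg.symm⟩
    rintro rfl
    exact hadj.ne (φ.injective (Subtype.ext (hf.symm.trans hg)))
end

section
/- Let H be an acyclic hypergraph with join tree T and head-path (x, z_1, ..., z_k, y), and let P be the path in T from e(x,z_1) to e(z_k,y). Define sep_x as the first node on P not containing x, and sep_y as the last node on P not containing y. Define T_x as the nodes of T whose tree-path to e(x,z_1) avoids sep_x, and T_y as the nodes whose tree-path to e(z_k,y) avoids sep_y. Then T_x and T_y are disjoint. -/
structure Hypergraph' (V : Type*) where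
  edges : Set (Set V)
  nonempty_of_mem : ∀ e ∈ edges, e.Nonempty

namespace Hypergraph'

variable {V : Type*}

/-- The vertex set of a hypergraph: all vertices occurring in some edge. -/
def vertexSet (H : Hypergraph' V) : Set V := ⋃ e ∈ H.edges, e

/-- Two vertices are neighbors if they appear together in some edge. -/
def Neighbors (H : Hypergraph' V) (u v : V) : Prop := ∃ e ∈ H.edges, u ∈ e ∧ v ∈ e

/-- A clique: a set of pairwise neighboring vertices. -/
def IsClique (H : Hypergraph' V) (C : Set V) : Prop := ∀ u ∈ C, ∀ v ∈ C, H.Neighbors u v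

/-- Conformal: every clique is contained in some edge. -/
def Conformal (H : Hypergraph' V) : Prop := ∀ C : Set V, H.IsClique C → ∃ e ∈ H.edges, C ⊆ e

/-- A chordless cycle (x_1, ..., x_n), n ≥ 3, of distinct vertices: the neighboring
pairs among them are exactly the consecutive (cyclically) ones. -/
def HasChordlessCycle (H : Hypergraph' V) : Prop :=
  ∃ (n : ℕ) (x : Fin (n + 3) → V), Function.Injective x ∧
    (∀ i, x i ∈ H.vertexSet) ∧
    ∀ i j : Fin (n + 3), i ≠ j → (H.Neighbors (x i) (x j) ↔ (j = i + 1 ∨ i = j + 1))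

/-- A join tree: a tree on the edges of `H` such that for each vertex the set of
edges containing it induces a connected subtree (running intersection property). -/
def IsJoinTree (H : Hypergraph' V) (T : SimpleGraph ↥H.edges) : Prop :=
  T.IsTree ∧ ∀ v ∈ H.vertexSet, (T.induce {e : ↥H.edges | v ∈ e.1}).Connected

/-- A hypergraph is acyclic if it admits a join tree. -/
def Acyclic (H : Hypergraph' V) : Prop := ∃ T : SimpleGraph ↥H.edges, H.IsJoinTree T

end Hypergraph'
/-- A head-path `(x, z_1, ..., z_k, y)`, `k ≥ 1`, for a hypergraph `H` with free
vertices `F`: a chordless path of distinct vertices, whose endpoints `x = v 0`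
and `y = v (k+1)` are free and whose middle vertices are not free; consecutive
vertices co-occur in some edge, non-consecutive ones do not. -/
structure HeadPath {V : Type*} (H : Hypergraph' V) (F : Set V) (k : ℕ) where
  v : Fin (k + 2) → V
  kpos : 1 ≤ k
  inj : Function.Injective v
  first_free : v 0 ∈ F
  last_free : v (Fin.last (k + 1)) ∈ F
  mid_not_free : ∀ i : Fin (k + 2), i ≠ 0 → i ≠ Fin.last (k + 1) → v i ∉ F
  consec : ∀ i : Fin (k + 1), H.Neighbors (v i.castSucc) (v i.succ)
  chordless : ∀ i j : Fin (k + 2), (i : ℕ) + 1 < (j : ℕ) → ¬ H.Neighbors (v i) (v j)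

namespace SimpleGraph.Walk

variable {V : Type*} {G : SimpleGraph V}

lemma getD_support_eq_getVert {u v : V} (p : G.Walk u v) (d : V) :
    ∀ i, i ≤ p.length → p.support.getD i d = p.getVert i := by
  induction p with
  | nil =>
    intro i hi
    have : i = 0 := Nat.le_zero.mp hi
    subst this
    rfl
  | cons h p ih =>
    intro i hi
    cases i with
    | zero => rfl
    | succ n =>
      have : n ≤ p.length := by simpa using hi
      simpa [support_cons, getVert_cons_succ] using ih n this

lemma nodup_getD_inj {α : Type*} {l : List α} (h : l.Nodup) {i j : ℕ}
    (hi : i < l.length) (hj : j < l.length) (d : α)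
    (he : l.getD i d = l.getD j d) : i = j := by
  rw [List.getD_eq_getElem l d hi, List.getD_eq_getElem l d hj] at he
  exact (h.getElem_inj_iff).mp he

lemma getD_mem_support {u v : V} (p : G.Walk u v) {i : ℕ} (hi : i < p.support.length) (d : V) :
    p.support.getD i d ∈ p.support := by
  rw [List.getD_eq_getElem _ d hi]
  exact List.getElem_mem _

lemma mem_support_dropUntil_of_le [DecidableEq V] {u v x : V} {p : G.Walk u v} (hp : p.IsPath)
    {ix iy : ℕ} (hix : ix < p.support.length) (hiy : iy < p.support.length)
    (hle : ix ≤ iy) (d : V) (hx : x ∈ p.support) (hxe : p.support.getD ix d = x) :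
    p.support.getD iy d ∈ (p.dropUntil x hx).support := by
  have hlen : p.support.length = p.length + 1 := p.length_support
  have hspec := p.take_spec hx
  set t := p.takeUntil x hx with ht
  set dd := p.dropUntil x hx with hdd
  have htlen : t.length ≤ p.length := p.length_takeUntil_le hx
  have hgv : p.getVert t.length = x := by
    conv_lhs => rw [← hspec]
    rw [getVert_append]
    simp
  have htix : t.length = ix := by
    refine nodup_getD_inj hp.support_nodup (by omega) hix d ?_
    rw [getD_support_eq_getVert p d t.length htlen, hgv, hxe]
  have hyv : p.support.getD iy d = dd.getVert (iy - ix) := by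
    rw [getD_support_eq_getVert p d iy (by omega)]
    conv_lhs => rw [← hspec]
    rw [getVert_append, htix]
    simp [Nat.not_lt.mpr hle]
  rw [hyv]
  by_cases hc : iy - ix ≤ dd.length
  · exact mem_support_iff_exists_getVert.mpr ⟨iy - ix, rfl, hc⟩
  · rw [getVert_of_length_le dd (by omega)]
    exact end_mem_support dd

end SimpleGraph.Walk

/-- With `P` the tree-path from `e(x,z_1)` to `e(z_k,y)`, `sep_x` the
first node on `P` not containing `x`, `sep_y` the last node on `P` not containing
`y`, `T_x` the nodes whose tree-path to `e(x,z_1)` avoids `sep_x` and `T_y` the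
nodes whose tree-path to `e(z_k,y)` avoids `sep_y`, the sets `T_x` and `T_y` are
disjoint. -/
theorem Tx_Ty_disjoint
    {V : Type*} (H : Hypergraph' V) (F : Set V) (k : ℕ)
    (T : SimpleGraph ↥H.edges) (hT : H.IsJoinTree T)
    (hp : HeadPath H F k)
    (w : Fin (k + 1) → ↥H.edges)
    (hw : ∀ i : Fin (k + 1), hp.v i.castSucc ∈ (w i).1 ∧ hp.v i.succ ∈ (w i).1)
    (P : T.Walk (w 0) (w (Fin.last k))) (hP : P.IsPath)
    (sepx sepy : ↥H.edges)
    (ix : ℕ) (hix : ix < P.support.length)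
    (hsepx : P.support.getD ix (w 0) = sepx)
    (hsepx_nox : hp.v 0 ∉ sepx.1)
    (hsepx_first : ∀ j, j < ix → hp.v 0 ∈ (P.support.getD j (w 0)).1)
    (iy : ℕ) (hiy : iy < P.support.length)
    (hsepy : P.support.getD iy (w 0) = sepy)
    (hsepy_noy : hp.v (Fin.last (k + 1)) ∉ sepy.1)
    (hsepy_last : ∀ j, iy < j → j < P.support.length →
      hp.v (Fin.last (k + 1)) ∈ (P.support.getD j (w 0)).1) :
    {n : ↥H.edges | ∀ q : T.Walk n (w 0), q.IsPath → sepx ∉ q.support} ∩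
      {n : ↥H.edges | ∀ q : T.Walk n (w (Fin.last k)), q.IsPath → sepy ∉ q.support}
      = ∅ := by
  
  classical
  rw [Set.eq_empty_iff_forall_notMem]
  rintro n ⟨hn1, hn2⟩
  have hlen : P.support.length = P.length + 1 := P.length_support
  have hnoxy : ∀ e : ↥H.edges, hp.v 0 ∈ e.1 → hp.v (Fin.last (k + 1)) ∈ e.1 → False := by
    intro e hx hy
    refine hp.chordless 0 (Fin.last (k + 1)) ?_ ⟨e.1, e.2, hx, hy⟩
    have hk := hp.kpos
    simp only [Fin.val_zero, Fin.val_last]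
    omega
  by_cases hcase : iy + 1 < ix
  · exact hnoxy _ (hsepx_first _ hcase) (hsepy_last _ (Nat.lt_succ_self iy) (by omega))
  obtain ⟨r1⟩ := hT.1.isConnected.preconnected n (w 0)
  obtain ⟨r2⟩ := hT.1.isConnected.preconnected n (w (Fin.last k))
  set q1 := r1.bypass with hq1def
  set q2 := r2.bypass with hq2def
  have hq1 : q1.IsPath := r1.bypass_isPath
  have hq2 : q2.IsPath := r2.bypass_isPath
  have hs1 : sepx ∉ q1.support := hn1 q1 hq1
  have hs2 : sepy ∉ q2.support := hn2 q2 hq2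
  have hxP : sepx ∈ P.support := hsepx ▸ P.getD_mem_support hix _
  have hyP : sepy ∈ P.support := hsepy ▸ P.getD_mem_support hiy _
  have hmem : ∀ z, z ∈ P.support → z ∈ q1.support ∨ z ∈ q2.support := by
    intro z hz
    have hPeq : P = (q1.reverse.append q2).bypass :=
      (hT.1.existsUnique_path (w 0) (w (Fin.last k))).unique hP
        (q1.reverse.append q2).bypass_isPath
    rw [hPeq] at hz
    have hz' := (q1.reverse.append q2).support_bypass_subset hz
    rw [SimpleGraph.Walk.mem_support_append_iff] at hz'
    rcases hz' with h | h
    · left; rwa [SimpleGraph.Walk.support_reverse, List.mem_reverse] at h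
    · right; exact h
  have hxq2 : sepx ∈ q2.support := (hmem _ hxP).resolve_left hs1
  have hyq1 : sepy ∈ q1.support := (hmem _ hyP).resolve_right hs2
  by_cases hc2 : ix ≤ iy
  · have heq : q2.dropUntil sepx hxq2 = P.dropUntil sepx hxP :=
      (hT.1.existsUnique_path sepx (w (Fin.last k))).unique (hq2.dropUntil hxq2)
        (hP.dropUntil hxP)
    have hmemd : sepy ∈ (P.dropUntil sepx hxP).support := by
      have h := SimpleGraph.Walk.mem_support_dropUntil_of_le hP hix hiy hc2 (w 0) hxP hsepx
      rwa [hsepy] at h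
    rw [← heq] at hmemd
    exact hs2 (q2.support_dropUntil_subset hxq2 hmemd)
  · have hix_eq : ix = iy + 1 := by omega
    have hylt : iy < P.length := by omega
    have hgvy : P.getVert iy = sepy := by
      rw [← SimpleGraph.Walk.getD_support_eq_getVert P (w 0) iy (by omega)]
      exact hsepy
    have hgvx : P.getVert (iy + 1) = sepx := by
      rw [← SimpleGraph.Walk.getD_support_eq_getVert P (w 0) (iy + 1) (by omega), ← hix_eq]
      exact hsepx
    have hadj : T.Adj sepy sepx := by
      have h := P.adj_getVert_succ hylt
      rwa [hgvy, hgvx] at h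
    have hbridge : T.IsBridge s(sepy, sepx) := by
      have hac := hT.1.2
      rw [SimpleGraph.isAcyclic_iff_forall_edge_isBridge] at hac
      exact hac (T.mem_edgeSet.mpr hadj)
    have he := (SimpleGraph.isBridge_iff_adj_and_forall_walk_mem_edges.mp hbridge)
      ((q1.takeUntil sepy hyq1).reverse.append (q2.takeUntil sepx hxq2))
    rw [SimpleGraph.Walk.edges_append, List.mem_append, SimpleGraph.Walk.edges_reverse,
      List.mem_reverse] at he
    rcases he with h | h
    · exact hs1 (q1.support_takeUntil_subset hyq1
        (SimpleGraph.Walk.snd_mem_support_of_mem_edges _ h))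
    · exact hs2 (q2.support_takeUntil_subset hxq2
        (SimpleGraph.Walk.fst_mem_support_of_mem_edges _ h))
end

section
/- Let T be a join tree of hypergraph H and let (x, z_1, ..., z_k, y) be a head-path with witnessing edges in T. With sep_x, sep_y, T_x, T_y defined as in the construction, every FD-like constraint U -> v of the form 'some node of T contains U union {v} and every node containing U contains v' with v occurring only in T_x satisfies: if no element of U occurs in a node of T_x, then every element of U is contained in sep_x, and hence v is contained in sep_x, contradiction. I.e., if v in V_x then U intersects V_x. -/
/-- Membership in the recursively defined set `V_x`: it contains `x`, and
whenever `U → v` is an FD with `v ∈ V_x`, it contains every `u ∈ U` that does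
not occur in a node outside `T_x` (the set `Out`). -/
inductive VxMem {Var : Type*} (Δ : Set (Set Var × Var)) (x : Var) (Out : Set Var) :
    Var → Prop
  | base : VxMem Δ x Out x
  | step (U : Set Var) (v u : Var) :
      (U, v) ∈ Δ → VxMem Δ x Out v → u ∈ U → u ∉ Out → VxMem Δ x Out u


private lemma VxMem_not_out {Var : Type*} (Δ : Set (Set Var × Var)) (x : Var)
    (Out : Set Var) (hx : x ∉ Out) : ∀ w, VxMem Δ x Out w → w ∉ Out := by
  intro w hw
  induction hw with
  | base => exact hx
  | step U v u hUv hv hu hout ih => exact hout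

/-- In the setting of the reduction-sets lemma: `T` is a join tree,
`ex` a node containing `x`, `sep` a node not containing `x`, `T_x` the set of
nodes whose tree-path to `ex` avoids `sep`, and `Out` the set of variables
occurring in some node outside `T_x` (with `x ∉ Out`). For the FD-like
constraints of `Δ` (each `U → v` witnessed by a node containing `U ∪ {v}`, with
every node containing `U` containing `v`): if `v ∈ V_x`, then `U` intersects
`V_x`. -/
theorem fd_left_side_meets_Vx
    {V : Type*} (H : Hypergraph' V) (T : SimpleGraph ↥H.edges)
    (hT : H.IsJoinTree T)
    (ex sep : ↥H.edges) (x : V) (hx : x ∈ ex.1) (hsep : x ∉ sep.1)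
    (Δ : Set (Set V × V))
    (hΔwit : ∀ U v, (U, v) ∈ Δ → ∃ n : ↥H.edges, U ⊆ n.1 ∧ v ∈ n.1)
    (hΔclosed : ∀ U v, (U, v) ∈ Δ → ∀ n : ↥H.edges, U ⊆ n.1 → v ∈ n.1)
    (hΔne : ∀ U v, (U, v) ∈ Δ → U.Nonempty)
    (Tx : Set ↥H.edges)
    (hTx : Tx = {n : ↥H.edges | ∀ q : T.Walk n ex, q.IsPath → sep ∉ q.support})
    (Out : Set V)
    (hOut : Out = {u : V | ∃ n : ↥H.edges, n ∉ Tx ∧ u ∈ n.1})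
    (hxOut : x ∉ Out) :
    ∀ U v, (U, v) ∈ Δ → VxMem Δ x Out v → ∃ u ∈ U, VxMem Δ x Out u := by
  classical
  intro U v hUv hv
  -- v does not occur outside Tx
  have hvOut : v ∉ Out := VxMem_not_out Δ x Out hxOut v hv
  -- it suffices to find u ∈ U with u ∉ Out
  by_contra hcon
  push_neg at hcon
  have hUOut : ∀ u ∈ U, u ∈ Out := by
    intro u hu
    by_contra h
    obtain ⟨u0, hu0⟩ := hΔne U v hUv
    exact hcon u hu (VxMem.step U v u hUv hv hu h)
  -- the witness node n is in Tx (since v ∈ n and v ∉ Out)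
  obtain ⟨n, hUn, hvn⟩ := hΔwit U v hUv
  have hnTx : n ∈ Tx := by
    by_contra h
    exact hvOut (hOut ▸ ⟨n, h, hvn⟩)
  -- sep is not in Tx
  have hsepTx : sep ∉ Tx := by
    rw [hTx]
    intro h
    obtain ⟨q⟩ := hT.1.isConnected.preconnected sep ex
    exact h q.toPath q.toPath.2 (SimpleGraph.Walk.start_mem_support _)
  -- a path from n to ex avoiding sep
  have hnTx' : ∀ q : T.Walk n ex, q.IsPath → sep ∉ q.support := by
    rw [hTx] at hnTx; exact hnTx
  obtain ⟨r0⟩ := hT.1.isConnected.preconnected n ex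
  set r : T.Walk n ex := r0.toPath.1 with hr
  have hrPath : r.IsPath := r0.toPath.2
  have hseprsupp : sep ∉ r.support := hnTx' r hrPath
  -- key: every u ∈ U is in sep
  have hUsep : U ⊆ sep.1 := by
    intro u hu
    obtain ⟨m, hmTx, hum⟩ : ∃ m : ↥H.edges, m ∉ Tx ∧ u ∈ m.1 := by
      have := hUOut u hu; rw [hOut] at this; exact this
    have hun : u ∈ n.1 := hUn hu
    -- u ∈ vertexSet
    have huV : u ∈ H.vertexSet := Set.mem_biUnion n.2 hun
    -- connected walk in induced subgraph from m to n, all nodes containing u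
    have hconn := hT.2 u huV
    obtain ⟨w0⟩ := hconn ⟨m, hum⟩ ⟨n, hun⟩
    let w : T.Walk m n := w0.map (SimpleGraph.Embedding.induce _).toHom
    have hwsupp : ∀ e ∈ w.support, u ∈ e.1 := by
      intro e he
      replace he : e ∈ (w0.map (SimpleGraph.Embedding.induce {e : ↥H.edges | u ∈ e.1}).toHom).support := he
      rw [SimpleGraph.Walk.support_map, List.mem_map] at he
      obtain ⟨⟨e', he'⟩, _, rfl⟩ := he
      exact he'
    -- p : path from m to n inside w's support
    set p : T.Walk m n := w.bypass with hp
    have hpPath : p.IsPath := w.bypass_isPath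
    have hpsub : ∀ e ∈ p.support, u ∈ e.1 := fun e he =>
      hwsupp e (w.support_bypass_subset (hp ▸ he))
    -- path from m to ex containing sep
    have hmTx' : ∃ q : T.Walk m ex, q.IsPath ∧ sep ∈ q.support := by
      rw [hTx] at hmTx
      simp only [Set.mem_setOf_eq, not_forall] at hmTx
      obtain ⟨q, hq, hq'⟩ := hmTx
      exact ⟨q, hq, not_not.mp hq'⟩
    obtain ⟨q, hqPath, hsepq⟩ := hmTx'
    -- the bypass of p.append r is a path m → ex, equal to q by tree uniqueness
    have hb : (p.append r).bypass.IsPath := (p.append r).bypass_isPath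
    have huniq := hT.1.existsUnique_path m ex
    have heq : (p.append r).bypass = q :=
      huniq.unique hb hqPath
    have hsepb : sep ∈ (p.append r).bypass.support := heq ▸ hsepq
    have hsepapp : sep ∈ (p.append r).support :=
      (p.append r).support_bypass_subset hsepb
    rw [SimpleGraph.Walk.mem_support_append_iff] at hsepapp
    have hsepp : sep ∈ p.support := hsepapp.resolve_right hseprsupp
    exact hpsub sep hsepp
  -- then v ∈ sep, but sep ∉ Tx and v ∉ Out: contradiction
  have hvsep : v ∈ sep.1 := hΔclosed U v hUv sep hUsep
  exact hvOut (hOut ▸ ⟨sep, hsepTx, hvsep⟩)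
end
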